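/- Let A ∈ ℝ^{M×N} with full row rank and row-space projection P = A†A, and let x, c_i ∈ ℝ^N, r ≥ 0. The set of minimal-norm targeted attacks is nonempty: there exists w* achieving min{‖w‖₂ : ∃ t, ‖t − c_i‖₂ ≤ r, A(x + w) = A t}, and the minimum equals max(‖P(c_i − x)‖₂ − r, 0). -/

import Mathlib

open scoped InnerProductSpace


/-- Moore–Penrose pseudoinverse of a full-row-rank matrix: `A† = Aᵀ (A Aᵀ)⁻¹`. -/
noncomputable def moorePenrosePinv {M N : ℕ} (A : Matrix (Fin M) (Fin N) ℝ) :
    Matrix (Fin N) (Fin M) ℝ :=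
  A.transpose * (A * A.transpose)⁻¹

lemma toEuclideanLin_mul_comp {m n p : ℕ} (C : Matrix (Fin m) (Fin n) ℝ)
    (D : Matrix (Fin n) (Fin p) ℝ) :
    Matrix.toEuclideanLin (C * D) =
      (Matrix.toEuclideanLin C).comp (Matrix.toEuclideanLin D) := by
  ext v
  simp [Matrix.toEuclideanLin_apply, Matrix.mulVec_mulVec]

lemma isUnit_AAT {M N : ℕ} (A : Matrix (Fin M) (Fin N) ℝ) (hrank : A.rank = M) :
    IsUnit (A * A.transpose) := by
  rw [← Matrix.mulVec_surjective_iff_isUnit]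
  have h1 : (A * A.transpose).rank = M := by
    rw [Matrix.rank_self_mul_transpose, hrank]
  have h2 : LinearMap.range (A * A.transpose).mulVecLin = ⊤ := by
    apply Submodule.eq_top_of_finrank_eq
    rw [← Matrix.rank, h1]
    simp [Module.finrank_fintype_fun_eq_card]
  intro y
  have : y ∈ LinearMap.range (A * A.transpose).mulVecLin := h2 ▸ Submodule.mem_top
  obtain ⟨v, hv⟩ := this
  exact ⟨v, hv⟩

set_option maxHeartbeats 1000000 in
/-- the minimal-norm targeted attack problem
`min { ‖w‖ : ∃ t, ‖t − c_i‖ ≤ r, A(x + w) = A t }` has a minimizer and its minimum value is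
`max (‖P(c_i − x)‖ − r) 0`, where `P = A†A`. -/
theorem minimal_norm_targeted_attack_value {M N : ℕ} (hMN : M ≤ N)
    (A : Matrix (Fin M) (Fin N) ℝ) (hrank : A.rank = M)
    (P : EuclideanSpace ℝ (Fin N) →ₗ[ℝ] EuclideanSpace ℝ (Fin N))
    (hP : P = Matrix.toEuclideanLin (moorePenrosePinv A * A))
    (x ci : EuclideanSpace ℝ (Fin N)) (r : ℝ) (hr : 0 ≤ r) :
    IsLeast {d : ℝ | ∃ (w t : EuclideanSpace ℝ (Fin N)), ‖t - ci‖ ≤ r ∧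
        Matrix.toEuclideanLin A (x + w) = Matrix.toEuclideanLin A t ∧ d = ‖w‖}
      (max (‖P (ci - x)‖ - r) 0) := by
  set B := moorePenrosePinv A with hB
  have hGunit : IsUnit (A * A.transpose) := isUnit_AAT A hrank
  have hGdet : IsUnit (A * A.transpose).det := (Matrix.isUnit_iff_isUnit_det _).mp hGunit
  have hABone : A * B = 1 := by
    rw [hB, moorePenrosePinv, ← Matrix.mul_assoc, Matrix.mul_nonsing_inv _ hGdet]
  set Q : Matrix (Fin N) (Fin N) ℝ := B * A with hQ
  have hQQ : Q * Q = Q := by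
    rw [hQ, Matrix.mul_assoc, ← Matrix.mul_assoc A B A, hABone, Matrix.one_mul]
  have hAQ : A * Q = A := by
    rw [hQ, ← Matrix.mul_assoc, hABone, Matrix.one_mul]
  have hQT : Q.conjTranspose = Q := by
    have hBT : B.transpose = (A * A.transpose)⁻¹ * A := by
      rw [hB, moorePenrosePinv, Matrix.transpose_mul, Matrix.transpose_transpose,
        Matrix.transpose_nonsing_inv, Matrix.transpose_mul, Matrix.transpose_transpose]
    have : Q.transpose = Q := by
      rw [hQ, Matrix.transpose_mul, hBT, hB, moorePenrosePinv, Matrix.mul_assoc]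
    rw [Matrix.conjTranspose_eq_transpose_of_trivial]; exact this
  set L := Matrix.toEuclideanLin A with hL
  -- P is idempotent
  have hPidem : ∀ v, P (P v) = P v := by
    intro v
    have : P.comp P = P := by
      rw [hP, ← toEuclideanLin_mul_comp, hQQ]
    exact congrFun (congrArg DFunLike.coe this) v
  -- P is self-adjoint
  have hPadj : ∀ u v : EuclideanSpace ℝ (Fin N), ⟪P u, v⟫_ℝ = ⟪u, P v⟫_ℝ := by
    intro u v
    have hadj : P = LinearMap.adjoint P := by
      conv_lhs => rw [hP, ← hQT, Matrix.toEuclideanLin_conjTranspose_eq_adjoint, ← hP]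
    conv_lhs => rw [hadj]
    exact LinearMap.adjoint_inner_left P v u
  -- A ∘ P = A
  have hAP : ∀ v, L (P v) = L v := by
    intro v
    have : L.comp P = L := by
      rw [hP, hL, ← toEuclideanLin_mul_comp, hAQ]
    exact congrFun (congrArg DFunLike.coe this) v
  -- P factors through A
  have hPA : ∀ v, P v = Matrix.toEuclideanLin B (L v) := by
    intro v
    rw [hP, hQ, toEuclideanLin_mul_comp]
    rfl
  -- P is a contraction
  have hPle : ∀ v : EuclideanSpace ℝ (Fin N), ‖P v‖ ≤ ‖v‖ := by
    intro v
    rcases eq_or_ne (P v) 0 with h0 | h0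
    · simp [h0]
    · have h1 : ‖P v‖ * ‖P v‖ = ⟪v, P v⟫_ℝ := by
        calc ‖P v‖ * ‖P v‖ = ⟪P v, P v⟫_ℝ := (real_inner_self_eq_norm_mul_norm (P v)).symm
          _ = ⟪v, P (P v)⟫_ℝ := hPadj v (P v)
          _ = ⟪v, P v⟫_ℝ := by rw [hPidem]
      have h2 : ⟪v, P v⟫_ℝ ≤ ‖v‖ * ‖P v‖ := real_inner_le_norm v (P v)
      have h3 : (0 : ℝ) < ‖P v‖ := norm_pos_iff.mpr h0
      nlinarith
  set u := ci - x with hu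
  set pn := ‖P u‖ with hpn
  have hpn0 : 0 ≤ pn := norm_nonneg _
  constructor
  · -- membership: construct minimizer
    by_cases hcase : pn ≤ r
    · refine ⟨0, ci - P u, ?_, ?_, ?_⟩
      · simpa using hpn ▸ hcase
      · have : L (ci - P u) = L (x + 0) := by
          simp only [map_sub, hAP, add_zero]
          rw [hu, map_sub]
          abel
        exact this.symm
      · rw [norm_zero, max_eq_right (by linarith)]
    · push_neg at hcase
      have hpnpos : 0 < pn := lt_of_le_of_lt hr hcase
      set s := r / pn with hs
      refine ⟨(1 - s) • P u, ci - s • P u, ?_, ?_, ?_⟩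
      · have h0 : ci - s • P u - ci = -(s • P u) := by abel
        rw [h0, norm_neg, norm_smul, Real.norm_eq_abs,
          abs_of_nonneg (div_nonneg hr hpnpos.le), ← hpn, div_mul_cancel₀ _ hpnpos.ne']
      · have : L (x + (1 - s) • P u) = L (ci - s • P u) := by
          simp only [map_add, map_sub, map_smul, hAP]
          have hLci : L ci = L x + L u := by
            rw [hu, map_sub]; abel
          rw [hLci]
          module
        exact this
      · have hs1 : s ≤ 1 := by
          rw [hs, div_le_one hpnpos]
          exact hcase.le
        have h2 : s * pn = r := by
          rw [hs]
          field_simp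
        rw [norm_smul, Real.norm_eq_abs,
          abs_of_nonneg (by linarith : (0:ℝ) ≤ 1 - s), ← hpn,
          max_eq_left (by linarith : (0:ℝ) ≤ pn - r)]
        linarith [h2]
  · -- lower bound
    rintro d ⟨w, t, hts, hAeq, rfl⟩
    rw [max_le_iff]
    refine ⟨?_, norm_nonneg w⟩
    have hLw : L w = L (t - x) := by
      have : L x + L w = L t := by
        rw [← map_add]; exact hAeq
      rw [map_sub]
      linear_combination (norm := module) this
    have hPw : P w = P (t - x) := by
      rw [hPA w, hPA (t - x), hLw]
    have hsplit : P u = P (t - x) - P (t - ci) := by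
      rw [← map_sub]
      congr 1
      rw [hu]; abel
    have h1 : pn ≤ ‖P (t - x)‖ + ‖P (t - ci)‖ := by
      rw [hpn, hsplit]
      exact norm_sub_le _ _
    have h2 : ‖P (t - ci)‖ ≤ r := le_trans (hPle _) hts
    have h3 : ‖P (t - x)‖ ≤ ‖w‖ := by
      rw [← hPw]; exact hPle w
    linarith
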